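/- For every N ≥ 1 divisible by 4, ∑_{i,j ∈ {0,1}^N} Tr(A₀^{i₁j₁}⋯A₀^{i_Nj_N}) |i⟩⟨j| = 𝟙 on (ℂ²)^{⊗N}, where A₀^{00} = [[0,−1,1],[0,1,−1],[0,0,0]], A₀^{11} = [[0,1,1],[0,1,1],[0,0,0]], and A₀^{01} = A₀^{10} = 0. -/

import Mathlib

open Matrix

noncomputable section

/-- The matrix product operator generated by a rank-4 tensor `A` (physical dimension `d`,
bond dimension `D`) with periodic boundary conditions:
`∑_{i,j} Tr(A^{i₁j₁}⋯A^{i_Nj_N}) |i₁…i_N⟩⟨j₁…j_N|`. -/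
def mpo {d D : ℕ} (A : Fin d → Fin d → Matrix (Fin D) (Fin D) ℂ) (N : ℕ) :
    Matrix (Fin N → Fin d) (Fin N → Fin d) ℂ :=
  Matrix.of fun f g => Matrix.trace (((List.finRange N).map fun k => A (f k) (g k)).prod)

/-- The bond-dimension-3 MPO tensor `A₀` with `A₀^{00} = [[0,−1,1],[0,1,−1],[0,0,0]]`,
`A₀^{11} = [[0,1,1],[0,1,1],[0,0,0]]` and `A₀^{01} = A₀^{10} = 0`. -/
def A0 : Fin 2 → Fin 2 → Matrix (Fin 3) (Fin 3) ℂ := fun i j =>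
  if i = 0 ∧ j = 0 then !![0, -1, 1; 0, 1, -1; 0, 0, 0]
  else if i = 1 ∧ j = 1 then !![0, 1, 1; 0, 1, 1; 0, 0, 0]
  else 0

private lemma fin2_cases (i : Fin 2) : i = 0 ∨ i = 1 := by fin_cases i <;> simp

private def Bm : Matrix (Fin 3) (Fin 3) ℂ := !![0, -1, 1; 0, 1, -1; 0, 0, 0]
private def Cm : Matrix (Fin 3) (Fin 3) ℂ := !![0, 1, 1; 0, 1, 1; 0, 0, 0]
private def Pm : Matrix (Fin 3) (Fin 3) ℂ := !![0, -1, -1; 0, 1, 1; 0, 0, 0]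
private def Qm : Matrix (Fin 3) (Fin 3) ℂ := !![0, 1, -1; 0, 1, -1; 0, 0, 0]

private lemma A0_prod_mem (l : List (Matrix (Fin 3) (Fin 3) ℂ))
    (h : ∀ x ∈ l, x = Bm ∨ x = Cm) (hne : l ≠ []) :
    l.prod = Bm ∨ l.prod = Cm ∨ l.prod = Pm ∨ l.prod = Qm := by
  induction l with
  | nil => exact absurd rfl hne
  | cons a t ih =>
    rcases t with _ | ⟨b, t⟩
    · simp only [List.prod_cons, List.prod_nil, mul_one]
      rcases h a (by simp) with h' | h'
      · exact Or.inl h'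
      · exact Or.inr (Or.inl h')
    · have ht : ∀ x ∈ b :: t, x = Bm ∨ x = Cm := fun x hx => h x (List.mem_cons_of_mem a hx)
      have hp := ih ht (by simp)
      rw [List.prod_cons]
      rcases h a (by simp) with ha | ha <;> subst ha <;>
        rcases hp with hp | hp | hp | hp <;> rw [hp] <;>
        [ (left; skip); (right; right; left; skip); (right; right; left; skip); (left; skip);
          (right; right; right; skip); (right; left; skip); (right; left; skip);
          (right; right; right; skip) ] <;>
        · ext i j
          fin_cases i <;> fin_cases j <;>
            simp [Bm, Cm, Pm, Qm, Matrix.mul_apply, Fin.sum_univ_three, Matrix.vecHead, Matrix.vecTail]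

private lemma A0_trace_mem (M : Matrix (Fin 3) (Fin 3) ℂ)
    (h : M = Bm ∨ M = Cm ∨ M = Pm ∨ M = Qm) : M.trace = 1 := by
  rcases h with h | h | h | h <;> subst h <;>
    simp [Bm, Cm, Pm, Qm, Matrix.trace_fin_three]

/-- For every `N ≥ 1` divisible by 4, the MPO generated by `A₀` with periodic boundary
conditions is the identity on `(ℂ²)^{⊗N}`. -/
theorem mpo_A0_eq_one (N : ℕ) (hN : 1 ≤ N) (h4 : 4 ∣ N) :
    mpo A0 N = 1 := by
  ext f g
  rw [mpo, Matrix.of_apply, Matrix.one_apply]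
  by_cases hfg : f = g
  · subst hfg
    simp only [if_pos rfl]
    apply A0_trace_mem
    apply A0_prod_mem
    · intro x hx
      rcases List.mem_map.mp hx with ⟨k, _, rfl⟩
      rcases fin2_cases (f k) with h | h
      · left; simp [A0, h, Bm]
      · right; simp [A0, h, Cm]
    · have : (List.finRange N) ≠ [] := by
        simp [List.finRange_eq_nil_iff]
        omega
      simpa using this
  · rw [if_neg hfg]
    obtain ⟨k, hk⟩ : ∃ k, f k ≠ g k := by
      by_contra h
      push_neg at h
      exact hfg (funext h)
    have hz : A0 (f k) (g k) = 0 := by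
      rcases fin2_cases (f k) with hf | hf <;> rcases fin2_cases (g k) with hg | hg <;>
        simp_all [A0]
    have : (0 : Matrix (Fin 3) (Fin 3) ℂ) ∈ (List.finRange N).map fun k => A0 (f k) (g k) := by
      refine List.mem_map.mpr ⟨k, List.mem_finRange k, hz⟩
    rw [List.prod_eq_zero this, Matrix.trace_zero]
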